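/- Let A be a commutative ring and M a finitely generated A-module whose set P(M) of height-one primes in the support of the torsion submodule of M is finite. Then A_p is a valuation ring for every prime p maximal among those contained in the union of the primes in P(M) if and only if A_q is a valuation ring for every q in P(M). -/
import Mathlib


/-- The set `P(M)`: height-one primes of `A` lying in the support of the torsion
submodule of `M`. -/
def heightOneTorsionSupport (A : Type*) [CommRing A] (M : Type*) [AddCommGroup M]
    [Module A M] : Set (PrimeSpectrum A) :=
  {q | Order.height q = 1 ∧ q ∈ Module.support A (Submodule.torsion A M)}

/-- A commutative ring is a "valuation ring" in the sense of the paper if its ideals are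
linearly ordered by inclusion. -/
def IdealsLinearlyOrdered (B : Type*) [CommRing B] : Prop :=
  ∀ I J : Ideal B, I ≤ J ∨ J ≤ I

theorem stmt0 {A : Type*} [CommRing A] {M : Type*} [AddCommGroup M] [Module A M]
    [Module.Finite A M]
    (hfin : (heightOneTorsionSupport A M).Finite) :
    (∀ (P : Ideal A) [P.IsPrime],
        (P : Set A) ⊆ ⋃ q ∈ heightOneTorsionSupport A M, (q.asIdeal : Set A) →
        (∀ P' : Ideal A, P'.IsPrime →
          (P' : Set A) ⊆ ⋃ q ∈ heightOneTorsionSupport A M, (q.asIdeal : Set A) →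
          P ≤ P' → P = P') →
        IdealsLinearlyOrdered (Localization.AtPrime P)) ↔
      (∀ q ∈ heightOneTorsionSupport A M,
        IdealsLinearlyOrdered (Localization.AtPrime q.asIdeal)) := by
  classical
  -- rewrite the union over the finite set as a union over a finset
  have hunion : (⋃ q ∈ heightOneTorsionSupport A M, (q.asIdeal : Set A)) =
      ⋃ q ∈ (hfin.toFinset : Set (PrimeSpectrum A)), (q.asIdeal : Set A) := by
    rw [hfin.coe_toFinset]
  -- prime avoidance
  have avoid : ∀ (I : Ideal A),
      (I : Set A) ⊆ ⋃ q ∈ heightOneTorsionSupport A M, (q.asIdeal : Set A) →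
      ∃ q ∈ heightOneTorsionSupport A M, I ≤ q.asIdeal := by
    intro I hI
    rw [hunion] at hI
    rcases hfin.toFinset.eq_empty_or_nonempty with he | ⟨a, ha⟩
    · exfalso
      rw [he] at hI
      simpa using hI I.zero_mem
    · have := (Ideal.subset_union_prime (f := fun q : PrimeSpectrum A => q.asIdeal) a a
        (fun i _ _ _ => i.isPrime) (I := I)).mp hI
      obtain ⟨q, hq, hle⟩ := this
      exact ⟨q, hfin.mem_toFinset.mp hq, hle⟩
  -- elements of the set which are ≤ each other are equal
  have heq : ∀ q ∈ heightOneTorsionSupport A M, ∀ q' ∈ heightOneTorsionSupport A M,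
      q.asIdeal ≤ q'.asIdeal → q = q' := by
    intro q hq q' hq' hle
    by_contra hne
    have hlt : q < q' := lt_of_le_of_ne (show q ≤ q' from hle) hne
    have := Order.height_strictMono hlt (by rw [hq.1]; exact (by decide : (1:ℕ∞) < ⊤))
    rw [hq.1, hq'.1] at this
    exact lt_irrefl _ this
  constructor
  · intro h q hq
    have hsub : (q.asIdeal : Set A) ⊆ ⋃ r ∈ heightOneTorsionSupport A M, (r.asIdeal : Set A) :=
      Set.subset_biUnion_of_mem (u := fun r : PrimeSpectrum A => (r.asIdeal : Set A)) hq
    have := q.isPrime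
    refine h q.asIdeal hsub ?_
    intro P' hP' hP'sub hle
    obtain ⟨q', hq', hle'⟩ := avoid P' hP'sub
    have : q = q' := heq q hq q' hq' (hle.trans hle')
    exact le_antisymm hle (this ▸ hle')
  · intro h P hP hsub hmax
    obtain ⟨q, hq, hle⟩ := avoid P hsub
    have : P = q.asIdeal := hmax q.asIdeal q.isPrime
      (Set.subset_biUnion_of_mem (u := fun r : PrimeSpectrum A => (r.asIdeal : Set A)) hq) hle
    subst this
    exact h q hq
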